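/- Coercivity of the discrete advection–diffusion form: if ε > 4‖β‖_∞ (with Poincaré constant C = 2), then b(u,u) ≥ (ε − 4‖β‖_∞) ‖u‖_{∇,h}² for all u ∈ D_{0,h}, where b(u,v) = (β_x ∇_{x+}u + β_y ∇_{y+}u, v)_h + ε (∇_+u, ∇_+v)_h. -/

import Mathlib

noncomputable section

/-- Boundary-zero grid functions on `{0,…,N}²`. -/
def BZ (N : ℕ) (u : ℕ → ℕ → ℝ) : Prop :=
  ∀ i j, i ≤ N → j ≤ N → (i = 0 ∨ i = N ∨ j = 0 ∨ j = N) → u i j = 0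

/-- `‖u‖_{∇,h}² = ‖∇_{x+}u‖_h² + ‖∇_{y+}u‖_h²`. -/
def gradNorm2 (N : ℕ) (h : ℝ) (u : ℕ → ℕ → ℝ) : ℝ :=
  h ^ 2 * ∑ i ∈ Finset.range N, ∑ j ∈ Finset.range (N + 1),
      ((u (i + 1) j - u i j) / h) ^ 2
  + h ^ 2 * ∑ i ∈ Finset.range (N + 1), ∑ j ∈ Finset.range N,
      ((u i (j + 1) - u i j) / h) ^ 2

/-- The discrete advection–diffusion bilinear form
`b(u,v) = (β_x ∇_{x+}u + β_y ∇_{y+}u, v)_h + ε (∇_+u, ∇_+v)_h`. -/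
def bform (N : ℕ) (h βx βy ε : ℝ) (u v : ℕ → ℕ → ℝ) : ℝ :=
  h ^ 2 * ∑ i ∈ Finset.range N, ∑ j ∈ Finset.range (N + 1),
      (βx * ((u (i + 1) j - u i j) / h)) * v i j
  + h ^ 2 * ∑ i ∈ Finset.range (N + 1), ∑ j ∈ Finset.range N,
      (βy * ((u i (j + 1) - u i j) / h)) * v i j
  + ε * (h ^ 2 * ∑ i ∈ Finset.range N, ∑ j ∈ Finset.range (N + 1),
            ((u (i + 1) j - u i j) / h) * ((v (i + 1) j - v i j) / h)
        + h ^ 2 * ∑ i ∈ Finset.range (N + 1), ∑ j ∈ Finset.range N,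
            ((u i (j + 1) - u i j) / h) * ((v i (j + 1) - v i j) / h))

/-- Discrete integration by parts for boundary-zero 1D functions. -/
lemma ibp_aux (N : ℕ) (f : ℕ → ℝ) (h0 : f 0 = 0) (hNz : f N = 0) :
    ∑ i ∈ Finset.range N, (f (i + 1) - f i) * f i
      = -(1/2) * ∑ i ∈ Finset.range N, (f (i + 1) - f i) ^ 2 := by
  have ht : ∑ i ∈ Finset.range N, (f (i+1) ^ 2 - f i ^ 2) = f N ^ 2 - f 0 ^ 2 :=
    Finset.sum_range_sub (fun i => f i ^ 2) N
  have key : ∀ i ∈ Finset.range N,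
      (f (i+1) - f i) * f i
        = (f (i+1) ^ 2 - f i ^ 2) / 2 - (f (i+1) - f i) ^ 2 / 2 := by
    intro i _; ring
  rw [Finset.sum_congr rfl key, Finset.sum_sub_distrib, ← Finset.sum_div, ht,
    h0, hNz, ← Finset.sum_div]
  ring

/-- Coercivity of the discrete advection–diffusion form: if `ε > 4‖β‖_∞`
(Poincaré constant `C = 2`), then `b(u,u) ≥ (ε − 4‖β‖_∞) ‖u‖_{∇,h}²`. -/
theorem bform_coercive
    (N : ℕ) (hN : 0 < N) (h : ℝ) (hh : h = 1 / N)
    (βx βy ε : ℝ) (hε : 4 * max |βx| |βy| < ε)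
    (u : ℕ → ℕ → ℝ) (hu : BZ N u) :
    (ε - 4 * max |βx| |βy|) * gradNorm2 N h u ≤ bform N h βx βy ε u u := by
  have hNr : (1:ℝ) ≤ N := by exact_mod_cast hN
  have hpos : 0 < h := by rw [hh]; positivity
  have hle1 : h ≤ 1 := by rw [hh]; rw [div_le_one (by linarith)]; exact hNr
  have hne : h ≠ 0 := ne_of_gt hpos
  set A : ℝ := ∑ i ∈ Finset.range N, ∑ j ∈ Finset.range (N + 1),
      (u (i + 1) j - u i j) ^ 2 with hA
  set B : ℝ := ∑ i ∈ Finset.range (N + 1), ∑ j ∈ Finset.range N,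
      (u i (j + 1) - u i j) ^ 2 with hB
  have hA0 : 0 ≤ A := Finset.sum_nonneg fun i _ => Finset.sum_nonneg fun j _ => sq_nonneg _
  have hB0 : 0 ≤ B := Finset.sum_nonneg fun i _ => Finset.sum_nonneg fun j _ => sq_nonneg _
  -- gradNorm2 = A + B
  have hgrad : gradNorm2 N h u = A + B := by
    have e1 : ∀ (d : ℝ), h ^ 2 * (d / h) ^ 2 = d ^ 2 := by
      intro d; field_simp
    unfold gradNorm2
    rw [Finset.mul_sum, Finset.mul_sum]
    congr 1
    · refine Finset.sum_congr rfl fun i _ => ?_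
      rw [Finset.mul_sum]
      exact Finset.sum_congr rfl fun j _ => e1 _
    · refine Finset.sum_congr rfl fun i _ => ?_
      rw [Finset.mul_sum]
      exact Finset.sum_congr rfl fun j _ => e1 _
  -- x advection term
  have hx : h ^ 2 * ∑ i ∈ Finset.range N, ∑ j ∈ Finset.range (N + 1),
      (βx * ((u (i + 1) j - u i j) / h)) * u i j = -(h * βx / 2) * A := by
    have swap : ∑ i ∈ Finset.range N, ∑ j ∈ Finset.range (N + 1),
        (u (i + 1) j - u i j) * u i j
        = ∑ j ∈ Finset.range (N + 1), ∑ i ∈ Finset.range N,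
        (u (i + 1) j - u i j) * u i j := Finset.sum_comm
    have inner : ∀ j ∈ Finset.range (N + 1),
        ∑ i ∈ Finset.range N, (u (i + 1) j - u i j) * u i j
          = -(1/2) * ∑ i ∈ Finset.range N, (u (i + 1) j - u i j) ^ 2 := by
      intro j hj
      have hjN : j ≤ N := Nat.lt_succ_iff.mp (Finset.mem_range.mp hj)
      exact ibp_aux N (fun i => u i j)
        (hu 0 j (Nat.zero_le _) hjN (Or.inl rfl))
        (hu N j le_rfl hjN (Or.inr (Or.inl rfl)))
    have step : ∑ i ∈ Finset.range N, ∑ j ∈ Finset.range (N + 1),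
        (u (i + 1) j - u i j) * u i j = -(1/2) * A := by
      rw [swap, Finset.sum_congr rfl inner, ← Finset.mul_sum, hA, Finset.sum_comm]
    have factor : ∀ i ∈ Finset.range N, ∑ j ∈ Finset.range (N + 1),
        (βx * ((u (i + 1) j - u i j) / h)) * u i j
        = (βx / h) * ∑ j ∈ Finset.range (N + 1), (u (i + 1) j - u i j) * u i j := by
      intro i _
      rw [Finset.mul_sum]
      exact Finset.sum_congr rfl fun j _ => by ring
    rw [Finset.sum_congr rfl factor, ← Finset.mul_sum, step]
    field_simp
  -- y advection term
  have hy : h ^ 2 * ∑ i ∈ Finset.range (N + 1), ∑ j ∈ Finset.range N,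
      (βy * ((u i (j + 1) - u i j) / h)) * u i j = -(h * βy / 2) * B := by
    have inner : ∀ i ∈ Finset.range (N + 1),
        ∑ j ∈ Finset.range N, (u i (j + 1) - u i j) * u i j
          = -(1/2) * ∑ j ∈ Finset.range N, (u i (j + 1) - u i j) ^ 2 := by
      intro i hi
      have hiN : i ≤ N := Nat.lt_succ_iff.mp (Finset.mem_range.mp hi)
      exact ibp_aux N (fun j => u i j)
        (hu i 0 hiN (Nat.zero_le _) (Or.inr (Or.inr (Or.inl rfl))))
        (hu i N hiN le_rfl (Or.inr (Or.inr (Or.inr rfl))))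
    have step : ∑ i ∈ Finset.range (N + 1), ∑ j ∈ Finset.range N,
        (u i (j + 1) - u i j) * u i j = -(1/2) * B := by
      rw [Finset.sum_congr rfl inner, ← Finset.mul_sum, hB]
    have factor : ∀ i ∈ Finset.range (N + 1), ∑ j ∈ Finset.range N,
        (βy * ((u i (j + 1) - u i j) / h)) * u i j
        = (βy / h) * ∑ j ∈ Finset.range N, (u i (j + 1) - u i j) * u i j := by
      intro i _
      rw [Finset.mul_sum]
      exact Finset.sum_congr rfl fun j _ => by ring
    rw [Finset.sum_congr rfl factor, ← Finset.mul_sum, step]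
    field_simp
  -- diffusion term
  have hdiff : (h ^ 2 * ∑ i ∈ Finset.range N, ∑ j ∈ Finset.range (N + 1),
            ((u (i + 1) j - u i j) / h) * ((u (i + 1) j - u i j) / h)
        + h ^ 2 * ∑ i ∈ Finset.range (N + 1), ∑ j ∈ Finset.range N,
            ((u i (j + 1) - u i j) / h) * ((u i (j + 1) - u i j) / h)) = A + B := by
    have e1 : ∀ (d : ℝ), h ^ 2 * ((d / h) * (d / h)) = d ^ 2 := by
      intro d; field_simp
    rw [Finset.mul_sum, Finset.mul_sum]
    congr 1
    · refine Finset.sum_congr rfl fun i _ => ?_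
      rw [Finset.mul_sum]
      exact Finset.sum_congr rfl fun j _ => e1 _
    · refine Finset.sum_congr rfl fun i _ => ?_
      rw [Finset.mul_sum]
      exact Finset.sum_congr rfl fun j _ => e1 _
  have hbeq : bform N h βx βy ε u u
      = -(h * βx / 2) * A + -(h * βy / 2) * B + ε * (A + B) := by
    unfold bform
    rw [hx, hy, hdiff]
  rw [hgrad, hbeq]
  have hMx : |βx| ≤ max |βx| |βy| := le_max_left _ _
  have hMy : |βy| ≤ max |βx| |βy| := le_max_right _ _
  have h1 : βx ≤ |βx| := le_abs_self _
  have h2 : -βx ≤ |βx| := neg_le_abs _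
  have h3 : βy ≤ |βy| := le_abs_self _
  have h4 : -βy ≤ |βy| := neg_le_abs _
  nlinarith [mul_nonneg hA0 (abs_nonneg βx), mul_nonneg hB0 (abs_nonneg βy),
    mul_le_mul_of_nonneg_left hMx hA0, mul_le_mul_of_nonneg_left hMy hB0,
    mul_nonneg hA0 hpos.le, mul_nonneg hB0 hpos.le]
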